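/- Under hypotheses (H), let ĉ := lim_{s→∞} f(s), which exists and is positive since f is increasing and bounded. Then lim_{s→∞} f'(s)²·g(s)²/(n·j(f(s))²) = 0 and lim_{s→∞} E(s)·g(s)²/(n·j(f(s))²) = 1; consequently lim_{s→∞} E(s)·s^{2δ} = n·j(ĉ)²/C₁². -/

import Mathlib

open Real Filter Topology

set_option maxHeartbeats 1600000

/-- Squared energy density `|dF|²(s) = f'(s)² + n · j(f(s))² / g(s)²` of the rotationally
symmetric map `F(s,θ) = (f(s),θ)` between `M_g` and `N_j`. -/
noncomputable def energyDensitySq (n : ℕ) (g j f : ℝ → ℝ) (s : ℝ) : ℝ :=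
  (deriv f s) ^ 2 + (n : ℝ) * (j (f s)) ^ 2 / (g s) ^ 2

/-- `f` solves the rotationally symmetric `p`-harmonic equation `τ_p(F) = 0`. -/
def SolvesPHarmonic (n : ℕ) (p : ℝ) (g j f : ℝ → ℝ) : Prop :=
  ∀ s : ℝ, 0 < s → 0 < energyDensitySq n g j f s →
    deriv (deriv f) s
      + ((n : ℝ) / (g s) ^ 2) * (g s * deriv g s * deriv f s - j (f s) * deriv j (f s))
      + (p - 2) * (energyDensitySq n g j f s)⁻¹ * deriv f s *
          (deriv f s * deriv (deriv f) s
            + (n : ℝ) * (j (f s) / (g s) ^ 3) *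
                (deriv j (f s) * deriv f s * g s - j (f s) * deriv g s)) = 0

lemma add_rpow_le' (x y q : ℝ) (hx : 0 ≤ x) (hy : 0 ≤ y) (hq : 0 ≤ q) :
    (x + y) ^ q ≤ 2 ^ q * (x ^ q + y ^ q) := by
  have hxy : x + y ≤ 2 * max x y := by
    rcases le_total x y with h | h
    · rw [max_eq_right h]; linarith
    · rw [max_eq_left h]; linarith
  have h1 : (x + y) ^ q ≤ (2 * max x y) ^ q :=
    Real.rpow_le_rpow (by linarith) hxy hq
  have h2 : (2 * max x y) ^ q = 2 ^ q * (max x y) ^ q :=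
    Real.mul_rpow (by norm_num) (le_max_of_le_left hx)
  have h3 : (max x y) ^ q ≤ x ^ q + y ^ q := by
    rcases le_total x y with h | h
    · rw [max_eq_right h]
      have := Real.rpow_nonneg hx q
      linarith
    · rw [max_eq_left h]
      have := Real.rpow_nonneg hy q
      linarith
  calc (x + y) ^ q ≤ 2 ^ q * (max x y) ^ q := by rw [← h2]; exact h1
    _ ≤ 2 ^ q * (x ^ q + y ^ q) := by
        have : (0:ℝ) ≤ 2 ^ q := Real.rpow_nonneg (by norm_num) q
        nlinarith [h3]

lemma bounded_of_le_add_rpow' (θ K M : ℝ) (hθ1 : θ < 1) (hK : 0 ≤ K) (hM : 0 ≤ M) :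
    ∃ R, 0 < R ∧ ∀ x : ℝ, 0 ≤ x → x ≤ K + M * x ^ θ → x ≤ R := by
  have hTnn : (0:ℝ) ≤ (2 * M) ^ (1 / (1 - θ)) := Real.rpow_nonneg (by linarith) _
  refine ⟨1 + 2 * K + (2 * M) ^ (1 / (1 - θ)), by positivity, ?_⟩
  intro x hx hle
  by_contra hcon
  push_neg at hcon
  have hx1 : (1:ℝ) ≤ x := by linarith
  have hxpos : (0:ℝ) < x := by linarith
  have h1θ : (0:ℝ) < 1 - θ := by linarith
  have hpow : 2 * M ≤ x ^ (1 - θ) := by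
    rcases le_or_gt (2 * M) 1 with hM1 | hM1
    · calc 2 * M ≤ 1 := hM1
        _ = (1:ℝ) ^ (1 - θ) := (Real.one_rpow _).symm
        _ ≤ x ^ (1 - θ) := Real.rpow_le_rpow (by norm_num) hx1 h1θ.le
    · have hRM : (2 * M) ^ (1 / (1 - θ)) ≤ x := by linarith
      calc 2 * M = (2 * M) ^ ((1 / (1 - θ)) * (1 - θ)) := by
            rw [one_div, inv_mul_cancel₀ h1θ.ne', Real.rpow_one]
        _ = ((2 * M) ^ (1 / (1 - θ))) ^ (1 - θ) := Real.rpow_mul (by linarith) _ _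
        _ ≤ x ^ (1 - θ) := Real.rpow_le_rpow hTnn hRM h1θ.le
  have hsplit : x ^ θ * x ^ (1 - θ) = x := by
    rw [← Real.rpow_add hxpos, add_sub_cancel, Real.rpow_one]
  have hxθpos : (0:ℝ) < x ^ θ := Real.rpow_pos_of_pos hxpos θ
  have hMx : M * x ^ θ ≤ x / 2 := by
    have := mul_le_mul_of_nonneg_left hpow (le_of_lt hxθpos)
    rw [hsplit] at this
    nlinarith
  linarith

lemma integral_rpow_le' (s₀ s β : ℝ) (h0 : 0 < s₀) (hs : s₀ ≤ s) (hβ : β < -1) :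
    ∫ t in s₀..s, t ^ β ≤ s₀ ^ (β + 1) / (-(β + 1)) := by
  have h0s : (0:ℝ) ∉ Set.uIcc s₀ s := by
    rw [Set.uIcc_of_le hs]
    intro hmem
    exact absurd hmem.1 (not_le.mpr h0)
  rw [integral_rpow (Or.inr ⟨by linarith, h0s⟩)]
  have hb1 : (0:ℝ) < -(β + 1) := by linarith
  have h1 : (0:ℝ) ≤ s ^ (β + 1) := Real.rpow_nonneg (by linarith) _
  have heq : (s ^ (β + 1) - s₀ ^ (β + 1)) / (β + 1)
      = (s₀ ^ (β + 1) - s ^ (β + 1)) / (-(β + 1)) := by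
    rw [div_neg, ← neg_div, neg_sub]
  rw [heq, div_le_div_iff₀ hb1 hb1]
  nlinarith

lemma sq_rpow' (x q : ℝ) (hx : 0 ≤ x) : (x ^ 2) ^ q = x ^ (2 * q) := by
  rw [← Real.rpow_natCast x 2, ← Real.rpow_mul hx]
  norm_num

lemma hasDerivAt_h' (m : ℕ) (p q : ℝ) (g j f : ℝ → ℝ) (s : ℝ)
    (hq : q = (p-2)/2)
    (hfd : HasDerivAt f (deriv f s) s)
    (hvd : HasDerivAt (deriv f) (deriv (deriv f) s) s)
    (hgd : HasDerivAt g (deriv g s) s)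
    (hjd : HasDerivAt j (deriv j (f s)) (f s))
    (hgpos : 0 < g s)
    (hEpos : 0 < energyDensitySq (m+2) g j f s)
    (ode : deriv (deriv f) s
      + (((m+2 : ℕ) : ℝ) / (g s) ^ 2) * (g s * deriv g s * deriv f s - j (f s) * deriv j (f s))
      + (p - 2) * (energyDensitySq (m+2) g j f s)⁻¹ * deriv f s *
          (deriv f s * deriv (deriv f) s
            + ((m+2 : ℕ) : ℝ) * (j (f s) / (g s) ^ 3) *
                (deriv j (f s) * deriv f s * g s - j (f s) * deriv g s)) = 0) :
    HasDerivAt (fun t => g t ^ (m+2) * energyDensitySq (m+2) g j f t ^ q * deriv f t)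
      (((m+2 : ℕ) : ℝ) * g s ^ m * energyDensitySq (m+2) g j f s ^ q *
        (j (f s) * deriv j (f s))) s := by
  set N : ℝ := ((m+2 : ℕ) : ℝ) with hN
  set V := deriv f s with hV
  set V' := deriv (deriv f) s with hV'
  set G := g s with hG
  set G' := deriv g s with hG'
  set J := j (f s) with hJ
  set J' := deriv j (f s) with hJ'
  have hGne : G ≠ 0 := hgpos.ne'
  have hG2ne : G ^ 2 ≠ 0 := pow_ne_zero 2 hGne
  set E : ℝ → ℝ := energyDensitySq (m+2) g j f with hEdef
  have hEne : E s ≠ 0 := hEpos.ne'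
  set Ed : ℝ := 2*V*V' + 2*N*(J/G^3)*(J'*V*G - J*G') with hEd
  have hjf : HasDerivAt (fun t => j (f t)) (J' * V) s := hjd.comp s hfd
  have hE : HasDerivAt E Ed s := by
    have h1 : HasDerivAt (fun t => (deriv f t) ^ 2) (2 * V * V') s := by
      simpa [hV] using hvd.fun_pow 2
    have h2 : HasDerivAt (fun t => N * (j (f t)) ^ 2 / (g t) ^ 2)
        ((N * (2 * J * (J' * V)) * G ^ 2 - N * J ^ 2 * (2 * G * G')) / (G ^ 2) ^ 2) s := by
      have hnum : HasDerivAt (fun t => N * (j (f t)) ^ 2)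
          (N * (2 * J * (J' * V))) s := by
        simpa [mul_comm, mul_assoc, mul_left_comm] using (hjf.pow 2).const_mul N
      have hden : HasDerivAt (fun t => (g t) ^ 2) (2 * G * G') s := by
        simpa using hgd.fun_pow 2
      simpa [mul_div_assoc] using hnum.fun_div hden hG2ne
    have h12 := h1.add h2
    refine h12.congr_deriv ?_
    rw [hEd]
    field_simp
  have hErpow : HasDerivAt (fun t => E t ^ q) (q * E s ^ (q-1) * Ed) s := by
    have := (Real.hasDerivAt_rpow_const (p := q) (Or.inl hEne)).comp s hE
    exact this.congr_deriv (by ring)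
  have hgp : HasDerivAt (fun t => g t ^ (m+2)) ((N * G ^ (m+1)) * G') s := by
    have h := hgd.fun_pow (m+2)
    have he : m + 2 - 1 = m + 1 := rfl
    rw [he] at h
    convert h using 1
  have hprod := (hgp.mul hErpow).mul hvd
  refine hprod.congr_deriv (Eq.symm ?_)
  rw [Real.rpow_sub_one hEne]
  set X : ℝ := E s ^ q with hX
  have step2 : V' + N*G'*V/G + (p-2)*(E s)⁻¹*V*(V*V' + N*(J/G^3)*(J'*V*G - J*G'))
      = N*J*J'/G^2 := by
    have expand : (N/G^2)*(G*G'*V - J*J') = N*G'*V/G - N*J*J'/G^2 := by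
      field_simp
    rw [expand] at ode
    linarith [ode]
  calc N * G ^ m * X * (J * J')
      = G^(m+2) * X * (N*J*J'/G^2) := by field_simp; ring
    _ = G^(m+2) * X * (V' + N*G'*V/G
          + (p-2)*(E s)⁻¹*V*(V*V' + N*(J/G^3)*(J'*V*G - J*G'))) := by rw [step2]
    _ = (N * G ^ (m + 1) * G' * X + G ^ (m + 2) * (q * (X / E s) * Ed)) * V
          + G ^ (m + 2) * X * V' := by
        rw [hEd, hq]
        field_simp
        ring

/-- Under hypotheses (H), with `ĉ = lim_{s→∞} f(s) > 0`, one has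
`f'(s)²·g(s)²/(n·j(f(s))²) → 0`, `|dF|²(s)·g(s)²/(n·j(f(s))²) → 1`, and
`|dF|²(s) ~ n·j(ĉ)²/C₁² · s^{-2δ}` as `s → +∞`. -/
theorem energy_asymptotics (n : ℕ) (p a C₁ δ : ℝ) (g j f : ℝ → ℝ)
    (hn : 2 ≤ n) (hp₁ : max 2 (n : ℝ) < p) (hp₂ : p < (n : ℝ) + 1)
    (ha : 0 < a) (hC₁ : 0 < C₁) (hδ : (p - (n : ℝ))⁻¹ < δ)
    (hg : ContDiffOn ℝ 1 g (Set.Ioi 0)) (hj : ContDiffOn ℝ 1 j (Set.Ioi 0))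
    (hg0 : g 0 = 0) (hj0 : j 0 = 0)
    (hg'0 : HasDerivWithinAt g 1 (Set.Ici 0) 0) (hj'0 : HasDerivWithinAt j 1 (Set.Ici 0) 0)
    (hgpos : ∀ s > (0:ℝ), 0 < g s) (hjpos : ∀ t > (0:ℝ), 0 < j t)
    (hj' : ∀ t > (0:ℝ), 0 < deriv j t ∧ deriv j t ≤ a)
    (hg' : ∀ᶠ s in atTop, 0 < deriv g s)
    (hgasym : Tendsto (fun s => g s / (C₁ * s ^ δ)) atTop (𝓝 1))
    (hf : ContDiffOn ℝ 2 f (Set.Ici 0))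
    (hfbdd : ∃ B, ∀ s ≥ (0:ℝ), |f s| ≤ B)
    (hf0 : f 0 = 0)
    (hfpos : ∀ s > (0:ℝ), 0 < f s) (hf'pos : ∀ s > (0:ℝ), 0 < deriv f s)
    (hsol : SolvesPHarmonic n p g j f) :
    ∃ c : ℝ, 0 < c ∧ Tendsto f atTop (𝓝 c) ∧
      Tendsto (fun s : ℝ => (deriv f s) ^ 2 * (g s) ^ 2 / ((n : ℝ) * (j (f s)) ^ 2))
        atTop (𝓝 0) ∧
      Tendsto (fun s : ℝ => energyDensitySq n g j f s * (g s) ^ 2 / ((n : ℝ) * (j (f s)) ^ 2))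
        atTop (𝓝 1) ∧
      Tendsto (fun s : ℝ => energyDensitySq n g j f s * s ^ (2 * δ))
        atTop (𝓝 ((n : ℝ) * (j c) ^ 2 / C₁ ^ 2)) := by
  obtain ⟨m, rfl⟩ : ∃ m, n = m + 2 := ⟨n - 2, by omega⟩
  set N : ℝ := ((m + 2 : ℕ) : ℝ) with hNdef
  have hN2 : (2:ℝ) ≤ N := by rw [hNdef]; push_cast; linarith
  have hNpos : (0:ℝ) < N := by linarith
  have hp2 : (2:ℝ) < p := lt_of_le_of_lt (le_max_left _ _) hp₁
  have hpn : N < p := lt_of_le_of_lt (le_max_right _ _) hp₁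
  have hpn1 : p < N + 1 := hp₂
  have hp1 : (1:ℝ) < p - 1 := by linarith
  have hδpn : 1 < δ * (p - N) := by
    have hpm : (0:ℝ) < p - N := by linarith
    have := hδ
    rw [inv_lt_iff_one_lt_mul₀ hpm] at this
    linarith [this]
  have hδ0 : (0:ℝ) < δ := by
    by_contra hcon
    push_neg at hcon
    nlinarith
  set q : ℝ := (p - 2) / 2 with hqdef
  have hq0 : 0 < q := by rw [hqdef]; linarith
  set θ : ℝ := (p - 2) / (p - 1) with hθdef
  have hθ0 : 0 < θ := by rw [hθdef]; exact div_pos (by linarith) (by linarith)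
  have hθ1 : θ < 1 := by
    rw [hθdef, div_lt_one (by linarith)]
    linarith
  set e₁ : ℝ := (m:ℝ) - ((m:ℝ)+2) * θ with he₁def
  set e₂ : ℝ := (m:ℝ) + 2 - p with he₂def
  have hNm : N = (m:ℝ) + 2 := by rw [hNdef]; push_cast; ring
  have he₁neg : e₁ < 0 := by
    rw [he₁def, hθdef]
    rw [sub_neg]
    rw [← mul_div_assoc, lt_div_iff₀ (by linarith : (0:ℝ) < p - 1)]
    nlinarith [hNm, hpn, hN2]
  have he₂neg : e₂ < 0 := by
    rw [he₂def]
    nlinarith [hNm]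
  have hβ₁ : δ * e₁ < -1 := by
    have key1 : (p-1) * (p - N) ≤ 2*p - N - 2 := by
      nlinarith [mul_pos (sub_pos.2 hpn1) (sub_pos.2 hp2)]
    have key2 : δ * (2*p - N - 2) > p - 1 := by nlinarith [hδpn, hδ0, hp1]
    have he₁eq : e₁ = (N - 2*p + 2)/(p-1) := by
      rw [he₁def, hθdef, hNm]
      field_simp
      ring
    have : δ * e₁ = (δ * (N - 2*p + 2))/(p-1) := by rw [he₁eq]; ring
    rw [this, div_lt_iff₀ (by linarith : (0:ℝ) < p - 1)]
    nlinarith [key2]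
  have hβ₂ : δ * e₂ < -1 := by
    have : δ * e₂ = -(δ * (p - N)) := by rw [he₂def, hNm]; ring
    rw [this]
    linarith [hδpn]
  set κ : ℝ := ((m:ℝ)+2)/(p-1) - 1 with hκdef
  have hκpos : 0 < κ := by
    rw [hκdef]
    rw [sub_pos, lt_div_iff₀ (by linarith : (0:ℝ) < p - 1)]
    nlinarith [hNm]
  -- the limit of f
  have hfcont : ContinuousOn f (Set.Ici 0) := hf.continuousOn
  have hfmono : StrictMonoOn f (Set.Ici 0) := by
    apply strictMonoOn_of_deriv_pos (convex_Ici 0) hfcont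
    intro x hx
    rw [interior_Ici] at hx
    exact hf'pos x hx
  obtain ⟨c, hc, hfc⟩ : ∃ c, 0 < c ∧ Tendsto f atTop (𝓝 c) := by
    set F : ℝ → ℝ := fun s => f (max s 0) with hF
    have hFmono : Monotone F := by
      intro x y hxy
      exact hfmono.monotoneOn (le_max_right x 0) (le_max_right y 0) (max_le_max hxy le_rfl)
    obtain ⟨B, hB⟩ := hfbdd
    have hFbdd : BddAbove (Set.range F) := by
      refine ⟨B, ?_⟩
      rintro _ ⟨s, rfl⟩
      exact (abs_le.mp (hB _ (le_max_right s 0))).2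
    have hFt : Tendsto F atTop (𝓝 (⨆ s, F s)) := tendsto_atTop_ciSup hFmono hFbdd
    refine ⟨⨆ s, F s, ?_, ?_⟩
    · have h1 : f 1 ≤ ⨆ s, F s := by
        have := le_ciSup hFbdd (1:ℝ)
        simpa [hF] using this
      exact lt_of_lt_of_le (hfpos 1 one_pos) h1
    · refine hFt.congr' ?_
      filter_upwards [eventually_ge_atTop (0:ℝ)] with s hs
      simp [hF, max_eq_left hs]
  have hjc : 0 < j c := hjpos c hc
  -- g tends to infinity
  have hgtop : Tendsto g atTop atTop := by
    have h1 : Tendsto (fun s : ℝ => C₁ * s ^ δ) atTop atTop :=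
      (tendsto_rpow_atTop hδ0).const_mul_atTop hC₁
    have h2 := hgasym.pos_mul_atTop one_pos h1
    refine h2.congr' ?_
    filter_upwards [eventually_gt_atTop (0:ℝ)] with s hs
    have : C₁ * s ^ δ ≠ 0 := by positivity
    field_simp
  -- j ∘ f tends to j c
  have hjf : Tendsto (fun s => j (f s)) atTop (𝓝 (j c)) := by
    have hcc : ContinuousAt j c := (hj.continuousOn.continuousAt (Ioi_mem_nhds hc))
    exact hcc.tendsto.comp hfc
  -- regularity facts
  have hf2 : ContDiffOn ℝ 2 f (Set.Ioi 0) := hf.mono Set.Ioi_subset_Ici_self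
  have hv1 : ContDiffOn ℝ 1 (deriv f) (Set.Ioi 0) :=
    hf2.deriv_of_isOpen isOpen_Ioi (by norm_num)
  have hfd : ∀ t : ℝ, 0 < t → HasDerivAt f (deriv f t) t := fun t ht =>
    (((hf2.differentiableOn (by norm_num)) t ht).differentiableAt
      (isOpen_Ioi.mem_nhds ht)).hasDerivAt
  have hvd : ∀ t : ℝ, 0 < t → HasDerivAt (deriv f) (deriv (deriv f) t) t := fun t ht =>
    (((hv1.differentiableOn (by norm_num)) t ht).differentiableAt
      (isOpen_Ioi.mem_nhds ht)).hasDerivAt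
  have hgd : ∀ t : ℝ, 0 < t → HasDerivAt g (deriv g t) t := fun t ht =>
    (((hg.differentiableOn (by norm_num)) t ht).differentiableAt
      (isOpen_Ioi.mem_nhds ht)).hasDerivAt
  have hjd : ∀ u : ℝ, 0 < u → HasDerivAt j (deriv j u) u := fun u hu =>
    (((hj.differentiableOn (by norm_num)) u hu).differentiableAt
      (isOpen_Ioi.mem_nhds hu)).hasDerivAt
  set E : ℝ → ℝ := energyDensitySq (m+2) g j f with hEdef
  have hEval : ∀ t, E t = (deriv f t) ^ 2 + N * (j (f t)) ^ 2 / (g t) ^ 2 := fun t => rfl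
  have hEpos : ∀ t : ℝ, 0 < t → 0 < E t := by
    intro t ht
    rw [hEval]
    have h1 : 0 < deriv f t := hf'pos t ht
    have h2 : 0 < g t := hgpos t ht
    have h3 : 0 < j (f t) := hjpos _ (hfpos t ht)
    positivity
  have hjfpos : ∀ t : ℝ, 0 < t → 0 < j (f t) := fun t ht => hjpos _ (hfpos t ht)
  have hj'f : ∀ t : ℝ, 0 < t → 0 < deriv j (f t) ∧ deriv j (f t) ≤ a := fun t ht =>
    hj' _ (hfpos t ht)
  -- the core : deriv f s * g s tends to 0
  have hvg : Tendsto (fun s => deriv f s * g s) atTop (𝓝 0) := by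
    set h : ℝ → ℝ := fun t => g t ^ (m+2) * E t ^ q * deriv f t with hhdef
    set H : ℝ → ℝ := fun t => N * g t ^ m * E t ^ q * (j (f t) * deriv j (f t)) with hHdef
    have hhpos : ∀ t : ℝ, 0 < t → 0 < h t := by
      intro t ht
      have h1 : 0 < deriv f t := hf'pos t ht
      have h2 : 0 < g t := hgpos t ht
      have h3 : 0 < E t ^ q := Real.rpow_pos_of_pos (hEpos t ht) q
      rw [hhdef]
      positivity
    have hHpos : ∀ t : ℝ, 0 < t → 0 < H t := by
      intro t ht
      have h2 : 0 < g t := hgpos t ht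
      have h3 : 0 < E t ^ q := Real.rpow_pos_of_pos (hEpos t ht) q
      have h4 : 0 < j (f t) := hjfpos t ht
      have h5 : 0 < deriv j (f t) := (hj'f t ht).1
      rw [hHdef]
      positivity
    have hH : ∀ t : ℝ, 0 < t → HasDerivAt h (H t) t := by
      intro t ht
      exact hasDerivAt_h' m p q g j f t hqdef (hfd t ht) (hvd t ht) (hgd t ht)
        (hjd _ (hfpos t ht)) (hgpos t ht) (hEpos t ht) (hsol t ht (hEpos t ht))
    -- continuity of H on Ioi 0
    have hgcont : ContinuousOn g (Set.Ioi 0) := hg.continuousOn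
    have hfcont' : ContinuousOn f (Set.Ioi 0) := hfcont.mono Set.Ioi_subset_Ici_self
    have hfmaps : Set.MapsTo f (Set.Ioi 0) (Set.Ioi 0) := fun t ht => hfpos t ht
    have hjfcont : ContinuousOn (fun t => j (f t)) (Set.Ioi 0) :=
      hj.continuousOn.comp hfcont' hfmaps
    have hj'fcont : ContinuousOn (fun t => deriv j (f t)) (Set.Ioi 0) :=
      (hj.continuousOn_deriv_of_isOpen isOpen_Ioi le_rfl).comp hfcont' hfmaps
    have hvcont : ContinuousOn (deriv f) (Set.Ioi 0) := hv1.continuousOn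
    have hEcont : ContinuousOn E (Set.Ioi 0) := by
      have : ContinuousOn (fun t => (deriv f t) ^ 2 + N * (j (f t)) ^ 2 / (g t) ^ 2)
          (Set.Ioi 0) := by
        refine (hvcont.pow 2).add (ContinuousOn.div ?_ (hgcont.pow 2) ?_)
        · exact continuousOn_const.mul (hjfcont.pow 2)
        · intro t ht
          exact pow_ne_zero 2 (hgpos t ht).ne'
      exact this
    have hEqcont : ContinuousOn (fun t => E t ^ q) (Set.Ioi 0) :=
      hEcont.rpow_const (fun t ht => Or.inl (hEpos t ht).ne')
    have hHcont : ContinuousOn H (Set.Ioi 0) := by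
      rw [hHdef]
      exact ((continuousOn_const.mul (hgcont.pow m)).mul hEqcont).mul
        (hjfcont.mul hj'fcont)
    -- choice of the starting point S
    have ev1 : ∀ᶠ s in atTop, C₁ / 2 * s ^ δ ≤ g s := by
      have h2 : ∀ᶠ s in atTop, (1:ℝ)/2 ≤ g s / (C₁ * s ^ δ) :=
        hgasym.eventually (eventually_ge_nhds (by norm_num))
      filter_upwards [h2, eventually_gt_atTop (0:ℝ)] with s h1 h0
      have hs : 0 < C₁ * s ^ δ := by positivity
      have := (le_div_iff₀ hs).mp h1
      calc C₁ / 2 * s ^ δ = 1/2 * (C₁ * s ^ δ) := by ring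
        _ ≤ g s := this
    have ev2 : ∀ᶠ s in atTop, j c / 2 ≤ j (f s) :=
      hjf.eventually (eventually_ge_nhds (by linarith))
    have ev3 : ∀ᶠ s in atTop, j (f s) ≤ 2 * j c :=
      hjf.eventually (eventually_le_nhds (by linarith))
    obtain ⟨S₀, hS₀⟩ := (ev1.and (ev2.and ev3)).exists_forall_of_atTop
    set S : ℝ := max S₀ 1 with hSdef
    have hS1 : (1:ℝ) ≤ S := le_max_right _ _
    have hSpos : (0:ℝ) < S := lt_of_lt_of_le one_pos hS1
    have hSfacts : ∀ s, S ≤ s →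
        C₁ / 2 * s ^ δ ≤ g s ∧ j c / 2 ≤ j (f s) ∧ j (f s) ≤ 2 * j c := fun s hs =>
      hS₀ s (le_trans (le_max_left _ _) hs)
    have hSt : ∀ s, S ≤ s → 0 < s := fun s hs => lt_of_lt_of_le hSpos hs
    -- h is monotone on [S, ∞)
    have hmonoh : MonotoneOn h (Set.Ici S) := by
      have : StrictMonoOn h (Set.Ici S) := by
        apply strictMonoOn_of_deriv_pos (convex_Ici S)
        · intro t ht
          exact ((hH t (hSt t ht)).differentiableAt.continuousAt).continuousWithinAt
        · intro x hx
          rw [interior_Ici] at hx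
          have hx0 : 0 < x := hSt x hx.le
          rw [(hH x hx0).deriv]
          exact hHpos x hx0
      exact this.monotoneOn
    -- basic inequality : v^(p-1) * g^(m+2) ≤ h
    have hvh : ∀ t : ℝ, 0 < t → (deriv f t) ^ (p-1) * g t ^ (m+2) ≤ h t := by
      intro t ht
      have hVt : 0 < deriv f t := hf'pos t ht
      have hGt : 0 < g t := hgpos t ht
      have hEt : 0 < E t := hEpos t ht
      have h1 : (deriv f t) ^ 2 ≤ E t := by
        rw [hEval]
        have h3 : 0 < j (f t) := hjfpos t ht
        have h4 : (0:ℝ) ≤ N * (j (f t)) ^ 2 / (g t) ^ 2 := by positivity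
        linarith
      have h2 : ((deriv f t) ^ 2) ^ q ≤ E t ^ q :=
        Real.rpow_le_rpow (by positivity) h1 hq0.le
      rw [sq_rpow' _ q hVt.le] at h2
      have h2q : 2 * q = p - 2 := by rw [hqdef]; ring
      rw [h2q] at h2
      have h3 : (deriv f t) ^ (p - 2) * deriv f t = (deriv f t) ^ (p-1) := by
        nth_rewrite 2 [← Real.rpow_one (deriv f t)]
        rw [← Real.rpow_add hVt]
        congr 1
        ring
      calc (deriv f t) ^ (p-1) * g t ^ (m+2)
          = ((deriv f t) ^ (p-2) * deriv f t) * g t ^ (m+2) := by rw [h3]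
        _ ≤ (E t ^ q * deriv f t) * g t ^ (m+2) := by
            exact mul_le_mul_of_nonneg_right
              (mul_le_mul_of_nonneg_right h2 hVt.le) (by positivity)
        _ = h t := by rw [hhdef]; ring
    -- constants
    set jc : ℝ := j c with hjcdef
    set A₁ : ℝ := N * (2*jc*a) * 2 ^ q * (C₁/2) ^ e₁ with hA₁def
    set A₂ : ℝ := N * (2*jc*a) * 2 ^ q * (N*(2*jc)^2) ^ q * (C₁/2) ^ e₂ with hA₂def
    have hA₁pos : 0 < A₁ := by
      rw [hA₁def]
      have := Real.rpow_pos_of_pos (by positivity : (0:ℝ) < C₁/2) e₁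
      have := Real.rpow_pos_of_pos (by norm_num : (0:ℝ) < 2) q
      positivity
    have hA₂pos : 0 < A₂ := by
      rw [hA₂def]
      have := Real.rpow_pos_of_pos (by positivity : (0:ℝ) < C₁/2) e₂
      have := Real.rpow_pos_of_pos (by norm_num : (0:ℝ) < 2) q
      have := Real.rpow_pos_of_pos (by positivity : (0:ℝ) < N*(2*jc)^2) q
      positivity
    -- pointwise bound on H
    have hHbound : ∀ s, S ≤ s → ∀ t ∈ Set.Icc S s,
        H t ≤ A₁ * (h s) ^ θ * t ^ (δ * e₁) + A₂ * t ^ (δ * e₂) := by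
      intro s hs t htmem
      have htS : S ≤ t := htmem.1
      have hts : t ≤ s := htmem.2
      have ht0 : 0 < t := hSt t htS
      have hGt : 0 < g t := hgpos t ht0
      have hVt : 0 < deriv f t := hf'pos t ht0
      have hEt : 0 < E t := hEpos t ht0
      obtain ⟨hgl, hjl, hju⟩ := hSfacts t htS
      obtain ⟨hj'p, hj'a⟩ := hj'f t ht0
      have hjtpos : 0 < j (f t) := hjfpos t ht0
      have hjj' : j (f t) * deriv j (f t) ≤ 2*jc*a :=
        mul_le_mul hju hj'a hj'p.le (by positivity)
      -- E^q upper bound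
      have hW : E t ≤ (deriv f t)^2 + (N*(2*jc)^2)/(g t)^2 := by
        rw [hEval]
        have h1 : (j (f t))^2 ≤ (2*jc)^2 := pow_le_pow_left₀ hjtpos.le hju 2
        have h2 : N * (j (f t))^2 / (g t)^2 ≤ N*(2*jc)^2/(g t)^2 := by
          have hnum : N * (j (f t))^2 ≤ N*(2*jc)^2 :=
            mul_le_mul_of_nonneg_left h1 hNpos.le
          exact div_le_div_of_nonneg_right hnum (by positivity) |>.trans_eq rfl
        linarith [h2]
      have h2q : 2 * q = p - 2 := by rw [hqdef]; ring
      have hEq1 : E t ^ q ≤ 2^q * ((deriv f t)^(p-2) + (N*(2*jc)^2)^q / (g t)^(p-2)) := by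
        calc E t ^ q ≤ ((deriv f t)^2 + (N*(2*jc)^2)/(g t)^2) ^ q :=
              Real.rpow_le_rpow hEt.le hW hq0.le
          _ ≤ 2^q * (((deriv f t)^2)^q + ((N*(2*jc)^2)/(g t)^2)^q) :=
              add_rpow_le' _ _ _ (by positivity) (by positivity) hq0.le
          _ = 2^q * ((deriv f t)^(p-2) + (N*(2*jc)^2)^q / (g t)^(p-2)) := by
              rw [sq_rpow' _ q hVt.le, Real.div_rpow (by positivity) (by positivity),
                sq_rpow' _ q hGt.le, h2q]
      -- v^(p-2) bound
      have hhspos : 0 < h s := hhpos s (hSt s hs)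
      have hhts : h t ≤ h s := hmonoh htS hs hts
      have hvp1 : (deriv f t) ^ (p-1) ≤ h s / (g t) ^ (m+2) := by
        rw [le_div_iff₀ (by positivity)]
        exact le_trans (hvh t ht0) hhts
      have hvp2 : (deriv f t) ^ (p-2) ≤ (h s) ^ θ / ((g t) ^ (m+2) : ℝ) ^ θ := by
        have e1 : (deriv f t)^(p-2) = ((deriv f t)^(p-1))^θ := by
          rw [← Real.rpow_mul hVt.le]
          congr 1
          have hne : p - 1 ≠ 0 := by linarith
          rw [hθdef]
          field_simp
        rw [e1, ← Real.div_rpow hhspos.le (by positivity)]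
        exact Real.rpow_le_rpow (by positivity) hvp1 hθ0.le
      -- power algebra for g
      have hgmθ : (g t : ℝ) ^ m / ((g t) ^ (m+2) : ℝ) ^ θ = (g t) ^ e₁ := by
        rw [← Real.rpow_natCast (g t) m, ← Real.rpow_natCast (g t) (m+2),
          ← Real.rpow_mul hGt.le, ← Real.rpow_sub hGt]
        congr 1
        rw [he₁def]
        push_cast
        ring
      have hgm2 : (g t : ℝ) ^ m / (g t) ^ (p-2) = (g t) ^ e₂ := by
        rw [← Real.rpow_natCast (g t) m, ← Real.rpow_sub hGt]
        congr 1
        rw [he₂def]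
        ring
      -- g^e ≤ (C₁/2)^e * t^(δe)
      have hge : ∀ e : ℝ, e ≤ 0 → (g t) ^ e ≤ (C₁/2) ^ e * t ^ (δ * e) := by
        intro e he
        have h1 : (0:ℝ) < C₁/2 * t ^ δ := by positivity
        have h2 : (g t) ^ e ≤ (C₁/2 * t ^ δ) ^ e :=
          Real.rpow_le_rpow_of_nonpos h1 hgl he
        rw [Real.mul_rpow (by positivity) (by positivity),
          ← Real.rpow_mul ht0.le] at h2
        exact h2
      have hge1 := hge e₁ he₁neg.le
      have hge2 := hge e₂ he₂neg.le
      -- assemble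
      have hstep1 : H t ≤ N * (2*jc*a) *
          (g t ^ m * (2^q * ((deriv f t)^(p-2) + (N*(2*jc)^2)^q / (g t)^(p-2)))) := by
        rw [hHdef]
        have hjj'0 : (0:ℝ) ≤ j (f t) * deriv j (f t) := by positivity
        have hEq' : (0:ℝ) ≤ E t ^ q := (Real.rpow_pos_of_pos hEt q).le
        calc N * g t ^ m * E t ^ q * (j (f t) * deriv j (f t))
            ≤ N * g t ^ m * E t ^ q * (2*jc*a) := by
              apply mul_le_mul_of_nonneg_left hjj' (by positivity)
          _ ≤ N * g t ^ m *
              (2^q * ((deriv f t)^(p-2) + (N*(2*jc)^2)^q / (g t)^(p-2))) * (2*jc*a) := by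
              apply mul_le_mul_of_nonneg_right ?_ (by positivity)
              apply mul_le_mul_of_nonneg_left hEq1 (by positivity)
          _ = N * (2*jc*a) *
              (g t ^ m * (2^q * ((deriv f t)^(p-2) + (N*(2*jc)^2)^q / (g t)^(p-2)))) := by
              ring
      have hterm1 : g t ^ m * (deriv f t)^(p-2)
          ≤ (h s)^θ * ((C₁/2)^e₁ * t^(δ*e₁)) := by
        calc g t ^ m * (deriv f t)^(p-2)
            ≤ g t ^ m * ((h s) ^ θ / ((g t) ^ (m+2) : ℝ) ^ θ) := by
              apply mul_le_mul_of_nonneg_left hvp2 (by positivity)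
          _ = (h s)^θ * ((g t : ℝ) ^ m / ((g t) ^ (m+2) : ℝ) ^ θ) := by ring
          _ = (h s)^θ * (g t) ^ e₁ := by rw [hgmθ]
          _ ≤ (h s)^θ * ((C₁/2)^e₁ * t^(δ*e₁)) := by
              apply mul_le_mul_of_nonneg_left hge1 (by positivity)
      have hterm2 : g t ^ m * ((N*(2*jc)^2)^q / (g t)^(p-2))
          ≤ (N*(2*jc)^2)^q * ((C₁/2)^e₂ * t^(δ*e₂)) := by
        calc g t ^ m * ((N*(2*jc)^2)^q / (g t)^(p-2))
            = (N*(2*jc)^2)^q * ((g t : ℝ) ^ m / (g t)^(p-2)) := by ring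
          _ = (N*(2*jc)^2)^q * (g t) ^ e₂ := by rw [hgm2]
          _ ≤ (N*(2*jc)^2)^q * ((C₁/2)^e₂ * t^(δ*e₂)) := by
              apply mul_le_mul_of_nonneg_left hge2 (Real.rpow_nonneg (by positivity) q)
      have h2qpos : (0:ℝ) < 2^q := Real.rpow_pos_of_pos (by norm_num) q
      calc H t ≤ N * (2*jc*a) *
          (g t ^ m * (2^q * ((deriv f t)^(p-2) + (N*(2*jc)^2)^q / (g t)^(p-2)))) := hstep1
        _ = N * (2*jc*a) * 2^q * (g t ^ m * (deriv f t)^(p-2))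
            + N * (2*jc*a) * 2^q * (g t ^ m * ((N*(2*jc)^2)^q / (g t)^(p-2))) := by ring
        _ ≤ N * (2*jc*a) * 2^q * ((h s)^θ * ((C₁/2)^e₁ * t^(δ*e₁)))
            + N * (2*jc*a) * 2^q * ((N*(2*jc)^2)^q * ((C₁/2)^e₂ * t^(δ*e₂))) := by
            have c1 : (0:ℝ) ≤ N * (2*jc*a) * 2^q := by positivity
            have := mul_le_mul_of_nonneg_left hterm1 c1
            have := mul_le_mul_of_nonneg_left hterm2 c1
            gcongr
        _ = A₁ * (h s) ^ θ * t ^ (δ * e₁) + A₂ * t ^ (δ * e₂) := by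
            rw [hA₁def, hA₂def]; ring
    -- integral inequality
    set M₁ : ℝ := S ^ (δ*e₁ + 1) / (-(δ*e₁ + 1)) with hM₁def
    set M₂ : ℝ := S ^ (δ*e₂ + 1) / (-(δ*e₂ + 1)) with hM₂def
    have hM₁pos : 0 < M₁ := by
      rw [hM₁def]
      have := Real.rpow_pos_of_pos hSpos (δ*e₁+1)
      have h2 : (0:ℝ) < -(δ*e₁+1) := by linarith [hβ₁]
      positivity
    have hM₂pos : 0 < M₂ := by
      rw [hM₂def]
      have := Real.rpow_pos_of_pos hSpos (δ*e₂+1)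
      have h2 : (0:ℝ) < -(δ*e₂+1) := by linarith [hβ₂]
      positivity
    have hkey : ∀ s, S ≤ s → h s ≤ (h S + A₂ * M₂) + (A₁ * M₁) * (h s) ^ θ := by
      intro s hs
      have hs0 : 0 < s := hSt s hs
      have hsub : Set.uIcc S s ⊆ Set.Ioi 0 := by
        rw [Set.uIcc_of_le hs]
        intro t htt
        exact hSt t htt.1
      have hIH : IntervalIntegrable H MeasureTheory.volume S s :=
        (hHcont.mono hsub).intervalIntegrable
      have hIφ₁ : IntervalIntegrable (fun t => A₁ * (h s)^θ * t ^ (δ*e₁))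
          MeasureTheory.volume S s := by
        apply ContinuousOn.intervalIntegrable
        apply continuousOn_const.mul
        exact ContinuousOn.rpow_const continuousOn_id
          (fun t ht => Or.inl (ne_of_gt (hsub ht)))
      have hIφ₂ : IntervalIntegrable (fun t => A₂ * t ^ (δ*e₂))
          MeasureTheory.volume S s := by
        apply ContinuousOn.intervalIntegrable
        apply continuousOn_const.mul
        exact ContinuousOn.rpow_const continuousOn_id
          (fun t ht => Or.inl (ne_of_gt (hsub ht)))
      have hFTC : ∫ t in S..s, H t = h s - h S := by
        apply intervalIntegral.integral_eq_sub_of_hasDerivAt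
        · intro t ht
          exact hH t (hsub ht)
        · exact hIH
      have hbnd : ∫ t in S..s, H t
          ≤ ∫ t in S..s, (A₁ * (h s)^θ * t ^ (δ*e₁) + A₂ * t ^ (δ*e₂)) := by
        apply intervalIntegral.integral_mono_on hs hIH (hIφ₁.add hIφ₂)
        exact hHbound s hs
      have hval : ∫ t in S..s, (A₁ * (h s)^θ * t ^ (δ*e₁) + A₂ * t ^ (δ*e₂))
          = A₁ * (h s)^θ * (∫ t in S..s, t^(δ*e₁)) + A₂ * (∫ t in S..s, t^(δ*e₂)) := by
        rw [intervalIntegral.integral_add hIφ₁ hIφ₂,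
          intervalIntegral.integral_const_mul, intervalIntegral.integral_const_mul]
      have hint1 : ∫ t in S..s, t^(δ*e₁) ≤ M₁ := integral_rpow_le' S s _ hSpos hs hβ₁
      have hint2 : ∫ t in S..s, t^(δ*e₂) ≤ M₂ := integral_rpow_le' S s _ hSpos hs hβ₂
      have hθs : (0:ℝ) ≤ (h s) ^ θ := Real.rpow_nonneg (hhpos s hs0).le θ
      have : h s - h S ≤ A₁ * (h s)^θ * M₁ + A₂ * M₂ := by
        rw [← hFTC]
        calc ∫ t in S..s, H t
            ≤ A₁ * (h s)^θ * (∫ t in S..s, t^(δ*e₁)) + A₂ * (∫ t in S..s, t^(δ*e₂)) := by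
              rw [← hval]; exact hbnd
          _ ≤ A₁ * (h s)^θ * M₁ + A₂ * M₂ := by
              have c1 : (0:ℝ) ≤ A₁ * (h s)^θ := by positivity
              have := mul_le_mul_of_nonneg_left hint1 c1
              have := mul_le_mul_of_nonneg_left hint2 hA₂pos.le
              linarith
      linarith
    -- h is bounded
    obtain ⟨R, hRpos, hR⟩ := bounded_of_le_add_rpow' θ (h S + A₂ * M₂) (A₁ * M₁) hθ1
      (by linarith [hhpos S hSpos, mul_pos hA₂pos hM₂pos])
      (mul_pos hA₁pos hM₁pos).le
    have hhR : ∀ s, S ≤ s → h s ≤ R := by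
      intro s hs
      exact hR (h s) (hhpos s (hSt s hs)).le (hkey s hs)
    -- bound on deriv f * g
    set R' : ℝ := R ^ (1/(p-1)) with hR'def
    have hvgbound : ∀ s, S ≤ s → deriv f s * g s ≤ R' * (g s) ^ (-κ) := by
      intro s hs
      have hs0 : 0 < s := hSt s hs
      have hVs : 0 < deriv f s := hf'pos s hs0
      have hGs : 0 < g s := hgpos s hs0
      have hvp1 : (deriv f s) ^ (p-1) ≤ R / (g s) ^ (m+2) := by
        rw [le_div_iff₀ (by positivity)]
        exact le_trans (hvh s hs0) (hhR s hs)
      have hvle : deriv f s ≤ R' / (g s) ^ (((m:ℝ)+2)/(p-1)) := by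
        have h1 : ((deriv f s) ^ (p-1)) ^ (1/(p-1)) ≤ (R / (g s) ^ (m+2)) ^ (1/(p-1)) :=
          Real.rpow_le_rpow (by positivity) hvp1 (by positivity)
        have h2 : ((deriv f s) ^ (p-1)) ^ (1/(p-1)) = deriv f s := by
          rw [← Real.rpow_mul hVs.le, mul_one_div, div_self (by linarith : p - 1 ≠ 0),
            Real.rpow_one]
        have h3 : (R / (g s) ^ (m+2)) ^ (1/(p-1))
            = R' / ((g s) ^ (m+2) : ℝ) ^ (1/(p-1)) := by
          rw [Real.div_rpow hRpos.le (by positivity), hR'def]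
        have h4 : ((g s) ^ (m+2) : ℝ) ^ (1/(p-1)) = (g s) ^ (((m:ℝ)+2)/(p-1)) := by
          rw [← Real.rpow_natCast (g s) (m+2), ← Real.rpow_mul hGs.le]
          congr 1
          push_cast
          ring
        rw [h2, h3, h4] at h1
        exact h1
      calc deriv f s * g s ≤ (R' / (g s) ^ (((m:ℝ)+2)/(p-1))) * g s := by
            apply mul_le_mul_of_nonneg_right hvle hGs.le
        _ = R' * ((g s) ^ (1:ℝ) / (g s) ^ (((m:ℝ)+2)/(p-1))) := by
            rw [Real.rpow_one]; ring
        _ = R' * (g s) ^ (-κ) := by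
            rw [← Real.rpow_sub hGs]
            congr 1
            rw [hκdef]
            ring
    -- conclude by squeezing
    have hgneg : Tendsto (fun s => (g s) ^ (-κ)) atTop (𝓝 0) :=
      (tendsto_rpow_neg_atTop hκpos).comp hgtop
    have hupper : Tendsto (fun s => R' * (g s) ^ (-κ)) atTop (𝓝 0) := by
      have := hgneg.const_mul R'
      rwa [mul_zero] at this
    refine tendsto_of_tendsto_of_tendsto_of_le_of_le' tendsto_const_nhds hupper ?_ ?_
    · filter_upwards [eventually_gt_atTop (0:ℝ)] with s hs
      have := hf'pos s hs
      have := hgpos s hs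
      positivity
    · filter_upwards [eventually_ge_atTop S] with s hs
      exact hvgbound s hs
  -- assembly of the three limits
  have hnjf : Tendsto (fun s => N * (j (f s)) ^ 2) atTop (𝓝 (N * (j c) ^ 2)) :=
    (hjf.pow 2).const_mul _
  have hnjc : (0:ℝ) < N * (j c) ^ 2 := by positivity
  have T1 : Tendsto (fun s : ℝ => (deriv f s) ^ 2 * (g s) ^ 2 / (N * (j (f s)) ^ 2))
      atTop (𝓝 0) := by
    have h1 : Tendsto (fun s : ℝ => (deriv f s * g s) ^ 2 * (N * (j (f s)) ^ 2)⁻¹)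
        atTop (𝓝 ((0:ℝ) ^ 2 * (N * (j c)^2)⁻¹)) := (hvg.pow 2).mul (hnjf.inv₀ hnjc.ne')
    have h0 : ((0:ℝ)) ^ 2 * (N * (j c) ^ 2)⁻¹ = 0 := by norm_num
    rw [h0] at h1
    refine h1.congr ?_
    intro s
    rw [mul_pow, div_eq_mul_inv]
  have e2ev : ∀ᶠ s in atTop, (deriv f s) ^ 2 * (g s) ^ 2 / (N * (j (f s)) ^ 2) + 1
      = E s * (g s) ^ 2 / (N * (j (f s)) ^ 2) := by
    filter_upwards [eventually_gt_atTop (0:ℝ)] with s hs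
    have h1 : g s ≠ 0 := (hgpos s hs).ne'
    have h2 : j (f s) ≠ 0 := (hjfpos s hs).ne'
    have h3 : N ≠ 0 := hNpos.ne'
    rw [hEval]
    field_simp
  have T2 : Tendsto (fun s : ℝ => E s * (g s) ^ 2 / (N * (j (f s)) ^ 2))
      atTop (𝓝 1) := by
    have h1 := T1.add (tendsto_const_nhds (x := (1:ℝ)))
    rw [zero_add] at h1
    exact h1.congr' e2ev
  have T3 : Tendsto (fun s : ℝ => E s * s ^ (2 * δ)) atTop (𝓝 (N * (j c) ^ 2 / C₁ ^ 2)) := by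
    have hu2 : Tendsto (fun s => (C₁ * (g s / (C₁ * s ^ δ)) ^ 2)⁻¹) atTop (𝓝 (C₁⁻¹)) := by
      have h1 : Tendsto (fun s => C₁ * (g s / (C₁ * s ^ δ)) ^ 2) atTop (𝓝 (C₁ * 1 ^ 2)) :=
        (hgasym.pow 2).const_mul _
      rw [one_pow, mul_one] at h1
      exact h1.inv₀ hC₁.ne'
    have T3' : Tendsto (fun s : ℝ => E s * (g s) ^ 2 / (N * (j (f s)) ^ 2)
          * (N * (j (f s))^2) * ((C₁ * (g s / (C₁ * s ^ δ)) ^ 2)⁻¹ * C₁⁻¹))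
        atTop (𝓝 (1 * (N * (j c)^2) * (C₁⁻¹ * C₁⁻¹))) :=
      (T2.mul hnjf).mul (hu2.mul tendsto_const_nhds)
    have hval : (1 : ℝ) * (N * (j c)^2) * (C₁⁻¹ * C₁⁻¹) = N * (j c) ^ 2 / C₁ ^ 2 := by
      field_simp
    rw [hval] at T3'
    refine T3'.congr' ?_
    have hev : ∀ᶠ s in atTop, (0:ℝ) < g s / (C₁ * s ^ δ) :=
      hgasym.eventually (eventually_gt_nhds one_pos)
    filter_upwards [eventually_gt_atTop (0:ℝ), hev] with s hs hus
    have hsδ : (0:ℝ) < s ^ δ := rpow_pos_of_pos hs δ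
    have h1 : g s ≠ 0 := (hgpos s hs).ne'
    have h2 : j (f s) ≠ 0 := (hjfpos s hs).ne'
    have h3 : (C₁ * s ^ δ) ≠ 0 := by positivity
    have h4 : s ^ (2*δ) = (s ^ δ)^2 := by
      rw [mul_comm, rpow_mul hs.le, rpow_two]
    have h5 : N ≠ 0 := hNpos.ne'
    rw [h4]
    field_simp
  exact ⟨c, hc, hfc, T1, T2, T3⟩
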